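/- Let α ∈ (0,2). Then the function g_α(t) := (2 sin(πα/2)/π) · t^{α-1} / ( 1 + 2 cos(πα/2)·t^α + t^{2α} ) is a probability density on (0,∞): g_α(t) > 0 for every t > 0 and ∫_0^∞ g_α(t) dt = 1. -/

import Mathlib

open Filter Set MeasureTheory

/-- For `α ∈ (0,2)`, the function
`g_α(t) = (2 sin(πα/2)/π) t^{α-1} / (1 + 2 cos(πα/2) t^α + t^{2α})` is a probability
density on `(0,∞)`. -/
theorem stable_factor_density (α : ℝ) (hα : 0 < α) (hα2 : α < 2) :
    (∀ t : ℝ, 0 < t →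
      0 < (2 * Real.sin (Real.pi * α / 2) / Real.pi) *
        (t ^ (α - 1) / (1 + 2 * Real.cos (Real.pi * α / 2) * t ^ α + t ^ (2 * α)))) ∧
    (∫ t in Set.Ioi (0 : ℝ),
        (2 * Real.sin (Real.pi * α / 2) / Real.pi) *
          (t ^ (α - 1) / (1 + 2 * Real.cos (Real.pi * α / 2) * t ^ α + t ^ (2 * α))))
      = 1 := by
  have hπ := Real.pi_pos
  set θ := Real.pi * α / 2 with hθdef
  have hθ0 : 0 < θ := by rw [hθdef]; positivity
  have hθπ : θ < Real.pi := by rw [hθdef]; nlinarith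
  set c := Real.cos θ with hc
  set s := Real.sin θ with hs
  have hspos : 0 < s := Real.sin_pos_of_pos_of_lt_pi hθ0 hθπ
  have hkey : ∀ t : ℝ, 0 < t →
      1 + 2 * c * t ^ α + t ^ (2 * α) = (t ^ α + c) ^ 2 + s ^ 2 := by
    intro t ht
    have h2 : t ^ (2 * α) = (t ^ α) ^ 2 := by
      rw [mul_comm, Real.rpow_mul ht.le]
      exact Real.rpow_two _
    have htrig : s ^ 2 + c ^ 2 = 1 := Real.sin_sq_add_cos_sq θ
    rw [h2]; ring_nf; nlinarith
  have hdenpos : ∀ u : ℝ, 0 < (u + c) ^ 2 + s ^ 2 := fun u => by positivity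
  constructor
  · intro t ht
    have h1 : 0 < 1 + 2 * c * t ^ α + t ^ (2 * α) := by
      rw [hkey t ht]; exact hdenpos _
    exact mul_pos (by positivity) (div_pos (Real.rpow_pos_of_pos ht _) h1)
  · -- the inner integral
    have harct : Real.arctan (c / s) = Real.pi / 2 - θ := by
      have : c / s = Real.tan (Real.pi / 2 - θ) := by
        rw [Real.tan_eq_sin_div_cos, Real.sin_pi_div_two_sub, Real.cos_pi_div_two_sub]
      rw [this]
      exact Real.arctan_tan (by linarith) (by linarith)
    have hderiv : ∀ u : ℝ, HasDerivAt (fun v : ℝ => s⁻¹ * Real.arctan ((v + c) / s))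
        (((u + c) ^ 2 + s ^ 2)⁻¹) u := by
      intro u
      have h1 : HasDerivAt (fun v : ℝ => (v + c) / s) (1 / s) u := by
        simpa using ((hasDerivAt_id u).add_const c).div_const s
      have h2 := (Real.hasDerivAt_arctan ((u + c) / s)).comp u h1
      have h3 := h2.const_mul s⁻¹
      refine h3.congr_deriv ?_
      have hs0 : s ≠ 0 := hspos.ne'
      field_simp
      ring
    have htop : Tendsto (fun v : ℝ => s⁻¹ * Real.arctan ((v + c) / s)) atTop
        (nhds (s⁻¹ * (Real.pi / 2))) := by
      have h1 : Tendsto (fun v : ℝ => (v + c) / s) atTop atTop :=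
        (tendsto_atTop_add_const_right _ c tendsto_id).atTop_div_const hspos
      exact ((Real.tendsto_arctan_atTop.mono_right nhdsWithin_le_nhds).comp h1).const_mul _
    have hI : ∫ u in Ioi (0 : ℝ), ((u + c) ^ 2 + s ^ 2)⁻¹ = s⁻¹ * θ := by
      rw [integral_Ioi_of_hasDerivAt_of_nonneg
        ((hderiv 0).continuousAt.continuousWithinAt)
        (fun x _ => hderiv x) (fun x _ => inv_nonneg.mpr (hdenpos x).le) htop]
      rw [zero_add, harct]
      ring
    have hswap := MeasureTheory.integral_comp_rpow_Ioi
      (fun u : ℝ => (2 * s / (Real.pi * α)) * ((u + c) ^ 2 + s ^ 2)⁻¹) (ne_of_gt hα)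
    have hcongr : (∫ t in Set.Ioi (0 : ℝ),
        (2 * s / Real.pi) * (t ^ (α - 1) / (1 + 2 * c * t ^ α + t ^ (2 * α))))
        = ∫ t in Ioi (0 : ℝ),
          (|α| * t ^ (α - 1)) •
            ((2 * s / (Real.pi * α)) * ((t ^ α + c) ^ 2 + s ^ 2)⁻¹) := by
      apply setIntegral_congr_fun measurableSet_Ioi
      intro t ht
      have ht' : (0 : ℝ) < t := ht
      simp only [smul_eq_mul]
      rw [hkey t ht', abs_of_pos hα]
      have hd := hdenpos (t ^ α)
      field_simp
    rw [hcongr, hswap]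
    rw [MeasureTheory.integral_const_mul, hI]
    field_simp
    ring
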